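/- Let A, A', B, B' be nonempty finite types, let 𝓔 be a quantum channel from A' × B' to A × B, and let 𝓕 be a quantum channel from A' to A. Then 𝓕 is a marginal of 𝓔 on A|A' — i.e. for every quantum state ρ on A' × B' one has 𝓕 (tr_{B'} ρ) = tr_B (𝓔 ρ) — if and only if the partial trace of the Choi matrix J(𝓔) over the output factor B equals, after the canonical reindexing A × (A' × B') ≃ (A × A') × B', the matrix J(𝓕) ⊗ ((1 / (Fintype.card B' : ℂ)) • (1 : Matrix B' B' ℂ)). -/

import Mathlib

open Matrix Kronecker
open scoped ComplexOrder

noncomputable section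

/-- A quantum state: positive semidefinite with unit trace. -/
def IsState {n : Type*} [Fintype n] (ρ : Matrix n n ℂ) : Prop :=
  ρ.PosSemidef ∧ ρ.trace = 1

/-- The Choi matrix of a linear map on matrices. -/
def choi {n m : Type*} [Fintype n] [DecidableEq n]
    (𝓔 : Matrix n n ℂ →ₗ[ℂ] Matrix m m ℂ) : Matrix (m × n) (m × n) ℂ :=
  Matrix.of fun p q =>
    (1 / (Fintype.card n : ℂ)) * 𝓔 (Matrix.single p.2 q.2 1) p.1 q.1

/-- A quantum channel: trace preserving and completely positive. -/
def IsChannel {n m : Type*} [Fintype n] [DecidableEq n] [Fintype m]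
    (𝓔 : Matrix n n ℂ →ₗ[ℂ] Matrix m m ℂ) : Prop :=
  (∀ ρ : Matrix n n ℂ, (𝓔 ρ).trace = ρ.trace) ∧ (choi 𝓔).PosSemidef

/-- Partial trace over the second (right) factor. -/
def trR {a b : Type*} [Fintype b] (M : Matrix (a × b) (a × b) ℂ) : Matrix a a ℂ :=
  Matrix.of fun i j => ∑ k, M (i, k) (j, k)

/-- Partial trace over the first (left) factor. -/
def trL {a b : Type*} [Fintype a] (M : Matrix (a × b) (a × b) ℂ) : Matrix b b ℂ :=
  Matrix.of fun i j => ∑ k, M (k, i) (k, j)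

/-- Partial trace over the third factor of a triple product. -/
def trC3 {a b c : Type*} [Fintype c] (M : Matrix (a × b × c) (a × b × c) ℂ) :
    Matrix (a × b) (a × b) ℂ :=
  Matrix.of fun i j => ∑ k, M (i.1, i.2, k) (j.1, j.2, k)

/-- Partial trace over the output factor `B` of a Choi-type matrix, composed with the
canonical reindexing `A × (A' × B') ≃ (A × A') × B'`. -/
def trOutB {A B A' B' : Type*} [Fintype B]
    (M : Matrix ((A × B) × (A' × B')) ((A × B) × (A' × B')) ℂ) :
    Matrix ((A × A') × B') ((A × A') × B') ℂ :=
  Matrix.of fun i j => ∑ k, M ((i.1.1, k), (i.1.2, i.2)) ((j.1.1, k), (j.1.2, j.2))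

/-- `trR` as a linear map. -/
def trRL {a b : Type*} [Fintype a] [Fintype b] :
    Matrix (a × b) (a × b) ℂ →ₗ[ℂ] Matrix a a ℂ where
  toFun := trR
  map_add' M N := by ext i j; simp [trR, Finset.sum_add_distrib]
  map_smul' c M := by ext i j; simp [trR, Finset.mul_sum]

lemma trR_std {a b : Type*} [Fintype b] [DecidableEq a] [DecidableEq b]
    (i j : a) (k l : b) :
    trR (Matrix.single (i, k) (j, l) (1 : ℂ)) =
      if k = l then Matrix.single i j 1 else 0 := by
  ext p q
  by_cases hkl : k = l
  · subst hkl
    rw [if_pos rfl]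
    show (∑ m, Matrix.single (i, k) (j, k) (1 : ℂ) (p, m) (q, m))
        = Matrix.single i j (1 : ℂ) p q
    rw [Finset.sum_eq_single k]
    · simp [Matrix.single, Prod.ext_iff]
    · intro m _ hm
      simp [Matrix.single, Prod.ext_iff, Ne.symm hm]
    · intro hk
      exact absurd (Finset.mem_univ k) hk
  · simp only [trR, Matrix.of_apply, Matrix.single, Prod.mk.injEq]
    rw [Finset.sum_eq_zero, if_neg hkl]
    · simp
    · intro m _
      rw [if_neg]
      rintro ⟨⟨-, h1⟩, -, h2⟩
      exact hkl (h1.trans h2.symm)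

lemma isState_outer' {n : Type*} [Fintype n] (v : n → ℂ) (c : ℝ) (hc : 0 < c)
    (hv : ∑ i, star (v i) * v i = (c : ℂ)) :
    IsState (((c : ℂ))⁻¹ • Matrix.of fun i j => v i * star (v j)) := by
  have hc0 : (c : ℂ) ≠ 0 := by exact_mod_cast hc.ne'
  have hcinv : (0 : ℂ) ≤ ((c : ℂ))⁻¹ := by
    rw [show ((c : ℂ))⁻¹ = ((c⁻¹ : ℝ) : ℂ) by push_cast; ring]
    exact_mod_cast (inv_nonneg.mpr hc.le)
  refine ⟨Matrix.posSemidef_iff_dotProduct_mulVec.mpr ⟨?_, ?_⟩, ?_⟩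
  · ext i j
    simp only [Matrix.conjTranspose_apply, Matrix.smul_apply, Matrix.of_apply,
      star_mul', star_star, smul_eq_mul]
    rw [show star (((c : ℂ))⁻¹) = ((c : ℂ))⁻¹ by
      simp [Complex.star_def, ← Complex.ofReal_inv]]
    ring
  · intro x
    have core : dotProduct (star x) ((Matrix.of fun i j => v i * star (v j)) *ᵥ x)
        = star (∑ i, star (v i) * x i) * (∑ i, star (v i) * x i) := by
      simp only [dotProduct, Matrix.mulVec, Matrix.of_apply, Pi.star_apply, star_sum,
        star_mul', star_star, Finset.mul_sum]
      rw [Finset.sum_comm]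
      refine Finset.sum_congr rfl fun i _ => ?_
      rw [Finset.sum_mul]
      exact Finset.sum_congr rfl fun j _ => by ring
    have : dotProduct (star x) ((((c : ℂ))⁻¹ • Matrix.of fun i j => v i * star (v j)) *ᵥ x)
        = ((c : ℂ))⁻¹ * (star (∑ i, star (v i) * x i) * (∑ i, star (v i) * x i)) := by
      rw [Matrix.smul_mulVec, dotProduct_smul, core]; simp
    rw [this]
    exact mul_nonneg hcinv (star_mul_self_nonneg _)
  · have : (Matrix.of fun i j => v i * star (v j)).trace = (c : ℂ) := by
      rw [← hv]
      simp only [Matrix.trace, Matrix.diag, Matrix.of_apply]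
      exact Finset.sum_congr rfl fun i _ => by ring
    rw [Matrix.trace_smul, this]
    simp [hc0]

lemma isState_single {n : Type*} [Fintype n] [DecidableEq n] (i : n) :
    IsState (Matrix.of fun k l => (Pi.single i 1 : n → ℂ) k * star ((Pi.single i 1 : n → ℂ) l)) := by
  have := isState_outer' (Pi.single i 1 : n → ℂ) 1 one_pos
    (by simp [Pi.single_apply, apply_ite (star : ℂ → ℂ)])
  simpa using this

lemma single_outer_eq {n : Type*} [Fintype n] [DecidableEq n] (i j : n) :
    Matrix.single i i (1 : ℂ) =
      Matrix.of fun k l => (Pi.single i 1 : n → ℂ) k * star ((Pi.single i 1 : n → ℂ) l) := by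
  ext k l
  by_cases hk : i = k <;> by_cases hl : i = l <;>
    simp [Matrix.single, Pi.single_apply, hk, hl, eq_comm]

/-- Two linear maps on matrices agreeing on all standard basis matrices are equal. -/
lemma linearMap_ext_std {n V : Type*} [Fintype n] [DecidableEq n]
    [AddCommMonoid V] [Module ℂ V]
    {f g : Matrix n n ℂ →ₗ[ℂ] V}
    (h : ∀ i j, f (Matrix.single i j 1) = g (Matrix.single i j 1)) : f = g := by
  ext M
  have hM := Matrix.matrix_eq_sum_single M
  rw [hM, map_sum, map_sum]
  refine Finset.sum_congr rfl fun i _ => ?_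
  rw [map_sum, map_sum]
  refine Finset.sum_congr rfl fun j _ => ?_
  have : Matrix.single i j (M i j) = (M i j) • Matrix.single i j (1 : ℂ) := by
    rw [Matrix.smul_single, smul_eq_mul, mul_one]
  rw [this, f.map_smul, g.map_smul, h]

lemma smul_cancel_eq {V : Type*} [AddCommGroup V] [Module ℂ V] {c : ℂ} (hc : c ≠ 0)
    {x y : V} (h : c • x = c • y) : x = y := by
  have := congrArg (fun v => c⁻¹ • v) h
  simpa [smul_smul, inv_mul_cancel₀ hc] using this

set_option maxRecDepth 10000 in
/-- Two linear maps on matrices agreeing on all states are equal. -/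
lemma linearMap_ext_state {n V : Type*} [Fintype n] [DecidableEq n]
    [AddCommGroup V] [Module ℂ V]
    {f g : Matrix n n ℂ →ₗ[ℂ] V}
    (h : ∀ ρ, IsState ρ → f ρ = g ρ) : f = g := by
  apply linearMap_ext_std
  intro i j
  by_cases hij : i = j
  · subst hij
    rw [single_outer_eq i i]
    exact h _ (isState_single i)
  · set w1 : n → ℂ := fun k => (Pi.single i 1 : n → ℂ) k + (Pi.single j 1 : n → ℂ) k with hw1
    set w2 : n → ℂ := fun k => (Pi.single i 1 : n → ℂ) k + Complex.I * (Pi.single j 1 : n → ℂ) k with hw2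
    have hw1sum : ∑ k, star (w1 k) * w1 k = ((2 : ℝ) : ℂ) := by
      have e : ∀ k, star (w1 k) * w1 k
          = ((if k = i then (1 : ℂ) else 0) + if k = j then (1 : ℂ) else 0) := by
        intro k
        by_cases hk : k = i <;> by_cases hk' : k = j <;>
          simp [hw1, Pi.single_apply, hk, hk'] <;> simp_all
      simp only [e, Finset.sum_add_distrib, Finset.sum_ite_eq', Finset.mem_univ, if_true]
      norm_num
    have hw2sum : ∑ k, star (w2 k) * w2 k = ((2 : ℝ) : ℂ) := by
      have e : ∀ k, star (w2 k) * w2 k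
          = ((if k = i then (1 : ℂ) else 0) + if k = j then (1 : ℂ) else 0) := by
        intro k
        by_cases hk : k = i <;> by_cases hk' : k = j <;>
          simp [hw2, Pi.single_apply, hk, hk', Complex.conj_I] <;> simp_all
      simp only [e, Finset.sum_add_distrib, Finset.sum_ite_eq', Finset.mem_univ, if_true]
      norm_num
    have s1 := isState_outer' w1 2 two_pos hw1sum
    have s2 := isState_outer' w2 2 two_pos hw2sum
    have s3 := isState_single (n := n) i
    have s4 := isState_single (n := n) j
    have hdec : Matrix.single i j (1 : ℂ) =
        ((((2 : ℝ) : ℂ))⁻¹ • Matrix.of fun k l => w1 k * star (w1 l))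
        + Complex.I • ((((2 : ℝ) : ℂ))⁻¹ • Matrix.of fun k l => w2 k * star (w2 l))
        - ((1 + Complex.I) / 2) •
            (Matrix.of fun k l => (Pi.single i 1 : n → ℂ) k * star ((Pi.single i 1 : n → ℂ) l))
        - ((1 + Complex.I) / 2) •
            (Matrix.of fun k l => (Pi.single j 1 : n → ℂ) k * star ((Pi.single j 1 : n → ℂ) l)) := by
      ext k l
      have hstd : Matrix.single i j (1 : ℂ) k l = if k = i ∧ l = j then 1 else 0 := by
        by_cases h1 : k = i <;> by_cases h2 : l = j
        · simp [Matrix.single, h1, h2]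
        · simp [Matrix.single, h1, h2, Ne.symm h2]
        · simp [Matrix.single, h1, h2, Ne.symm h1]
        · simp [Matrix.single, h1, h2, Ne.symm h1, Ne.symm h2]
      show Matrix.single i j (1 : ℂ) k l = _
      rw [hstd]
      simp only [Matrix.sub_apply, Matrix.add_apply, Matrix.smul_apply, Matrix.of_apply,
        smul_eq_mul]
      by_cases hk : k = i <;> by_cases hk' : k = j <;> by_cases hl : l = i <;>
        by_cases hl' : l = j <;>
        first
          | exact absurd (hk.symm.trans hk') hij
          | exact absurd (hl.symm.trans hl') hij
          | (simp [hw1, hw2, hk, hk', hl, hl', hij, Ne.symm hij, Pi.single_apply,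
              Complex.conj_I] <;> try ring_nf <;> try norm_num [Complex.I_sq, Complex.ext_iff])
    have two_ne : ((2 : ℝ) : ℂ) ≠ 0 := by norm_num
    have e1 : f (Matrix.of fun k l => w1 k * star (w1 l))
        = g (Matrix.of fun k l => w1 k * star (w1 l)) := by
      have h1 := h _ s1
      rw [_root_.map_smul, _root_.map_smul] at h1
      exact smul_cancel_eq (inv_ne_zero two_ne) h1
    have e2 : f (Matrix.of fun k l => w2 k * star (w2 l))
        = g (Matrix.of fun k l => w2 k * star (w2 l)) := by
      have h2 := h _ s2
      rw [_root_.map_smul, _root_.map_smul] at h2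
      exact smul_cancel_eq (inv_ne_zero two_ne) h2
    rw [hdec]
    simp only [map_sub, map_add, _root_.map_smul]
    rw [e1, e2, h _ s3, h _ s4]

/-- A channel `𝓕` is the marginal of `𝓔` on `A|A'` iff the partial trace of the Choi
matrix of `𝓔` over the output factor `B` equals `J(𝓕) ⊗ (𝟙/d_{B'})`. -/
theorem marginal_iff_choi
    {A A' B B' : Type*}
    [Fintype A] [DecidableEq A] [Nonempty A] [Fintype A'] [DecidableEq A'] [Nonempty A']
    [Fintype B] [DecidableEq B] [Nonempty B] [Fintype B'] [DecidableEq B'] [Nonempty B']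
    (𝓔 : Matrix (A' × B') (A' × B') ℂ →ₗ[ℂ] Matrix (A × B) (A × B) ℂ)
    (𝓕 : Matrix A' A' ℂ →ₗ[ℂ] Matrix A A ℂ)
    (h𝓔 : IsChannel 𝓔) (h𝓕 : IsChannel 𝓕) :
    (∀ ρ : Matrix (A' × B') (A' × B') ℂ, IsState ρ → 𝓕 (trR ρ) = trR (𝓔 ρ)) ↔
      trOutB (choi 𝓔) =
        choi 𝓕 ⊗ₖ ((1 / (Fintype.card B' : ℂ)) • (1 : Matrix B' B' ℂ)) := by
  have hA' : ((Fintype.card A' : ℂ)) ≠ 0 := by exact_mod_cast Fintype.card_ne_zero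
  have hB' : ((Fintype.card B' : ℂ)) ≠ 0 := by exact_mod_cast Fintype.card_ne_zero
  constructor
  · intro h
    have key : (𝓕.comp trRL) = ((trRL).comp 𝓔) :=
      linearMap_ext_state (fun ρ hρ => h ρ hρ)
    have key' : ∀ M, 𝓕 (trR M) = trR (𝓔 M) := fun M => LinearMap.congr_fun key M
    ext ⟨⟨a, a'⟩, b'⟩ ⟨⟨c, c'⟩, d'⟩
    show ∑ k, choi 𝓔 ((a, k), (a', b')) ((c, k), (c', d')) = _
    have lhs : ∑ k, choi 𝓔 ((a, k), (a', b')) ((c, k), (c', d'))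
        = (1 / (Fintype.card (A' × B') : ℂ)) *
          trR (𝓔 (Matrix.single (a', b') (c', d') 1)) a c := by
      rw [trR, Matrix.of_apply, Finset.mul_sum]
      rfl
    rw [lhs, ← key', trR_std]
    rw [Matrix.kroneckerMap_apply]
    simp only [choi, Matrix.of_apply, Matrix.smul_apply, Matrix.one_apply, smul_eq_mul]
    rw [apply_ite 𝓕, map_zero, Fintype.card_prod]
    push_cast
    by_cases hbd : b' = d' <;> simp [hbd] <;> ring
  · intro hch ρ _
    have key : (𝓕.comp trRL) = ((trRL).comp 𝓔) := by
      apply linearMap_ext_std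
      rintro ⟨a', b'⟩ ⟨c', d'⟩
      show 𝓕 (trR _) = trR (𝓔 _)
      ext a c
      have he : trOutB (choi 𝓔) ((a, a'), b') ((c, c'), d')
          = (choi 𝓕 ⊗ₖ ((1 / (Fintype.card B' : ℂ)) • (1 : Matrix B' B' ℂ)))
              ((a, a'), b') ((c, c'), d') := by rw [hch]
      have lhs : trOutB (choi 𝓔) ((a, a'), b') ((c, c'), d')
          = (1 / (Fintype.card (A' × B') : ℂ)) *
            trR (𝓔 (Matrix.single (a', b') (c', d') 1)) a c := by
        show ∑ k, choi 𝓔 ((a, k), (a', b')) ((c, k), (c', d')) = _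
        rw [trR, Matrix.of_apply, Finset.mul_sum]
        rfl
      rw [lhs] at he
      rw [Matrix.kroneckerMap_apply] at he
      simp only [choi, Matrix.of_apply, Matrix.smul_apply, Matrix.one_apply,
        smul_eq_mul, Fintype.card_prod] at he
      push_cast at he
      have hne : (1 : ℂ) / ((Fintype.card A' : ℂ) * (Fintype.card B' : ℂ)) ≠ 0 := by
        simp [hA', hB']
      have hmain : trR (𝓔 (Matrix.single (a', b') (c', d') 1)) a c
          = (if b' = d' then (1 : ℂ) else 0) * (𝓕 (Matrix.single a' c' 1)) a c := by
        apply mul_left_cancel₀ hne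
        rw [he]
        by_cases hbd : b' = d' <;> simp [hbd] <;> ring
      rw [trR_std, hmain, apply_ite 𝓕, map_zero]
      by_cases hbd : b' = d' <;> simp [hbd]
    exact LinearMap.congr_fun key ρ
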